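/- arXiv:1009.4922 — 2 statements merged into one kernel-verified Lean document; each statement's English description precedes it below -/
import Mathlib

section
/- Let p, p̃, A₁,…,A_n, Ã₁,…,Ã_n, B₁,…,B_m, B̃₁,…,B̃_m be two-variable polynomials satisfying the averaged sum-of-squares identity p(z)·conj(p(ζ)) − p̃(z)·conj(p̃(ζ)) = (1 − z₁conj(ζ₁))·(1/2)Σⱼ[Aⱼ(z)conj(Aⱼ(ζ)) + Ãⱼ(z)conj(Ãⱼ(ζ))] + (1 − z₂conj(ζ₂))·(1/2)Σⱼ[Bⱼ(z)conj(Bⱼ(ζ)) + B̃ⱼ(z)conj(B̃ⱼ(ζ))], where Ãⱼ, B̃ⱼ, p̃ are the reflections of Aⱼ, Bⱼ, p at bidegrees (n−1,m), (n,m−1), (n,m) respectively. Then the 'reflected in z alone' identity holds: p̃(z)p(ζ) − p(z)p̃(ζ) = (z₁ − ζ₁)·(1/2)Σⱼ[Ãⱼ(z)Aⱼ(ζ) + Aⱼ(z)Ãⱼ(ζ)] + (z₂ − ζ₂)·(1/2)Σⱼ[B̃ⱼ(z)Bⱼ(ζ) + Bⱼ(z)B̃ⱼ(ζ)] for all z,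 ζ ∈ ℂ² with nonzero coordinates (hence for all z, ζ by polynomiality). -/
open Metric Set Finset

/-- The two-variable polynomial with coefficient matrix `c`, evaluated at `z = (z₁, z₂)`. -/
noncomputable def poly2 {a b : ℕ} (c : Fin a → Fin b → ℂ) (z : ℂ × ℂ) : ℂ :=
  ∑ i : Fin a, ∑ j : Fin b, c i j * z.1 ^ (i : ℕ) * z.2 ^ (j : ℕ)

/-- Coefficient matrix of the reflection `X̃(z) = z₁^(a-1) z₂^(b-1) conj(X(1/z̄₁, 1/z̄₂))`. -/
noncomputable def refl2 {a b : ℕ} (c : Fin a → Fin b → ℂ) : Fin a → Fin b → ℂ :=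
  fun i j => (starRingEnd ℂ) (c i.rev j.rev)

lemma refl_refl {a b : ℕ} (c : Fin a → Fin b → ℂ) : refl2 (refl2 c) = c := by
  funext i j; simp [refl2]

lemma refl_eval {a b : ℕ} (c : Fin a → Fin b → ℂ) {z₁ z₂ : ℂ} (h1 : z₁ ≠ 0) (h2 : z₂ ≠ 0) :
    poly2 (refl2 c) (z₁, z₂) =
      z₁ ^ (a - 1) * z₂ ^ (b - 1) *
        (starRingEnd ℂ) (poly2 c (((starRingEnd ℂ) z₁)⁻¹, ((starRingEnd ℂ) z₂)⁻¹)) := by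
  unfold poly2 refl2
  simp only [map_sum, map_mul, map_pow, map_inv₀, Complex.conj_conj, Finset.mul_sum]
  refine Fintype.sum_equiv Fin.revPerm _ _ fun i => ?_
  refine Fintype.sum_equiv Fin.revPerm _ _ fun j => ?_
  simp only [Fin.revPerm_apply, Fin.rev_rev, Fin.val_rev]
  have e1 : z₁ ^ (a - 1) = z₁ ^ (i : ℕ) * z₁ ^ (a - ((i : ℕ) + 1)) := by
    rw [← pow_add]; congr 1; omega
  have e2 : z₂ ^ (b - 1) = z₂ ^ (j : ℕ) * z₂ ^ (b - ((j : ℕ) + 1)) := by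
    rw [← pow_add]; congr 1; omega
  rw [e1, e2]
  field_simp
  rw [one_div, one_div, inv_pow, inv_pow,
    mul_right_comm _ (z₂ ^ (b - ((j : ℕ) + 1))) (z₁ ^ (a - ((i : ℕ) + 1)))⁻¹,
    mul_inv_cancel_right₀ (pow_ne_zero _ h1), mul_inv_cancel_right₀ (pow_ne_zero _ h2)]

/-- Reflecting the averaged sum-of-squares identity (3) in `z` alone yields identity (4). -/
theorem sos_reflect_in_z (n m : ℕ)
    (p : Fin (n + 1) → Fin (m + 1) → ℂ)
    (A : Fin n → Fin n → Fin (m + 1) → ℂ)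
    (B : Fin m → Fin (n + 1) → Fin m → ℂ)
    (hsos : ∀ z ζ : ℂ × ℂ,
      poly2 p z * (starRingEnd ℂ) (poly2 p ζ) -
        poly2 (refl2 p) z * (starRingEnd ℂ) (poly2 (refl2 p) ζ) =
      (1 - z.1 * (starRingEnd ℂ) ζ.1) * ((1 / 2 : ℂ) *
          ∑ j : Fin n, (poly2 (A j) z * (starRingEnd ℂ) (poly2 (A j) ζ) +
            poly2 (refl2 (A j)) z * (starRingEnd ℂ) (poly2 (refl2 (A j)) ζ))) +
      (1 - z.2 * (starRingEnd ℂ) ζ.2) * ((1 / 2 : ℂ) *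
          ∑ j : Fin m, (poly2 (B j) z * (starRingEnd ℂ) (poly2 (B j) ζ) +
            poly2 (refl2 (B j)) z * (starRingEnd ℂ) (poly2 (refl2 (B j)) ζ)))) :
    ∀ z ζ : ℂ × ℂ, z.1 ≠ 0 → z.2 ≠ 0 → ζ.1 ≠ 0 → ζ.2 ≠ 0 →
      poly2 (refl2 p) z * poly2 p ζ - poly2 p z * poly2 (refl2 p) ζ =
      (z.1 - ζ.1) * ((1 / 2 : ℂ) *
          ∑ j : Fin n, (poly2 (refl2 (A j)) z * poly2 (A j) ζ +
            poly2 (A j) z * poly2 (refl2 (A j)) ζ)) +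
      (z.2 - ζ.2) * ((1 / 2 : ℂ) *
          ∑ j : Fin m, (poly2 (refl2 (B j)) z * poly2 (B j) ζ +
            poly2 (B j) z * poly2 (refl2 (B j)) ζ)) := by
  intro z ζ hz1 hz2 hζ1 hζ2
  set ω : ℂ × ℂ := (((starRingEnd ℂ) ζ.1)⁻¹, ((starRingEnd ℂ) ζ.2)⁻¹) with hω
  have H := hsos z ω
  have hω1 : (starRingEnd ℂ) ω.1 = ζ.1⁻¹ := by simp [hω]
  have hω2 : (starRingEnd ℂ) ω.2 = ζ.2⁻¹ := by simp [hω]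
  rw [hω1, hω2] at H
  have hrp : poly2 (refl2 p) ζ =
      ζ.1 ^ n * ζ.2 ^ m * (starRingEnd ℂ) (poly2 p ω) := by
    have := refl_eval p hζ1 hζ2
    simpa [hω] using this
  have hpe : poly2 p ζ =
      ζ.1 ^ n * ζ.2 ^ m * (starRingEnd ℂ) (poly2 (refl2 p) ω) := by
    have := refl_eval (refl2 p) hζ1 hζ2
    rw [refl_refl] at this
    simpa [hω] using this
  have hA : ζ.1 ^ n * ζ.2 ^ m *
      (∑ j : Fin n, (poly2 (A j) z * (starRingEnd ℂ) (poly2 (A j) ω) +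
        poly2 (refl2 (A j)) z * (starRingEnd ℂ) (poly2 (refl2 (A j)) ω))) =
      ζ.1 * ∑ j : Fin n, (poly2 (refl2 (A j)) z * poly2 (A j) ζ +
        poly2 (A j) z * poly2 (refl2 (A j)) ζ) := by
    rw [Finset.mul_sum, Finset.mul_sum]
    refine Finset.sum_congr rfl fun j _ => ?_
    have h1 := refl_eval (A j) hζ1 hζ2
    have h2 := refl_eval (refl2 (A j)) hζ1 hζ2
    rw [refl_refl] at h2
    have hn : ζ.1 ^ n = ζ.1 * ζ.1 ^ (n - 1) := by
      rw [← pow_succ']; congr 1; have := j.pos; omega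
    simp only [← hω, Prod.mk.eta, Nat.add_sub_cancel] at h1 h2
    rw [h1, h2, hn]; ring
  have hB : ζ.1 ^ n * ζ.2 ^ m *
      (∑ j : Fin m, (poly2 (B j) z * (starRingEnd ℂ) (poly2 (B j) ω) +
        poly2 (refl2 (B j)) z * (starRingEnd ℂ) (poly2 (refl2 (B j)) ω))) =
      ζ.2 * ∑ j : Fin m, (poly2 (refl2 (B j)) z * poly2 (B j) ζ +
        poly2 (B j) z * poly2 (refl2 (B j)) ζ) := by
    rw [Finset.mul_sum, Finset.mul_sum]
    refine Finset.sum_congr rfl fun j _ => ?_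
    have h1 := refl_eval (B j) hζ1 hζ2
    have h2 := refl_eval (refl2 (B j)) hζ1 hζ2
    rw [refl_refl] at h2
    have hm : ζ.2 ^ m = ζ.2 * ζ.2 ^ (m - 1) := by
      rw [← pow_succ']; congr 1; have := j.pos; omega
    simp only [← hω, Prod.mk.eta, Nat.add_sub_cancel] at h1 h2
    rw [h1, h2, hm]; ring
  have i1 : ζ.1 * ζ.1⁻¹ = 1 := mul_inv_cancel₀ hζ1
  have i2 : ζ.2 * ζ.2⁻¹ = 1 := mul_inv_cancel₀ hζ2
  linear_combination (poly2 (refl2 p) z) * hpe - (poly2 p z) * hrp -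
    (ζ.1 ^ n * ζ.2 ^ m) * H -
    ((1 - z.1 * ζ.1⁻¹) * (1 / 2 : ℂ)) * hA -
    ((1 - z.2 * ζ.2⁻¹) * (1 / 2 : ℂ)) * hB +
    (z.1 * ((1 / 2 : ℂ) * ∑ j : Fin n, (poly2 (refl2 (A j)) z * poly2 (A j) ζ +
      poly2 (A j) z * poly2 (refl2 (A j)) ζ))) * i1 +
    (z.2 * ((1 / 2 : ℂ) * ∑ j : Fin m, (poly2 (refl2 (B j)) z * poly2 (B j) ζ +
      poly2 (B j) z * poly2 (refl2 (B j)) ζ))) * i2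
end

section
/- Let F : D^{n+1} → D be holomorphic with F(z₀,w₀) = w₀ and |∂F/∂w (z₀,w₀)| = 1. Then there is an automorphism φ of D such that F(z,w) = φ(w) for all (z,w) ∈ D^{n+1}. -/
set_option maxHeartbeats 1000000
open Metric Set Complex

noncomputable def mobius (a w : ℂ) : ℂ := (w - a) / (1 - (starRingEnd ℂ) a * w)

lemma mobius_denom_ne (a w : ℂ) (ha : ‖a‖ < 1) (hw : ‖w‖ < 1) :
    1 - (starRingEnd ℂ) a * w ≠ 0 := by
  intro h
  have h1 : (starRingEnd ℂ) a * w = 1 := by linear_combination -h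
  have h2 : ‖(starRingEnd ℂ) a * w‖ < 1 := by
    rw [norm_mul, RCLike.norm_conj]
    nlinarith [norm_nonneg a, norm_nonneg w]
  rw [h1, norm_one] at h2
  exact lt_irrefl _ h2

lemma mobius_self (a : ℂ) : mobius a a = 0 := by simp [mobius]

lemma mobius_neg_zero (a : ℂ) : mobius (-a) 0 = a := by simp [mobius]

lemma conj_key (a w : ℂ) :
    (1 - (starRingEnd ℂ) a * w) * (starRingEnd ℂ) (1 - (starRingEnd ℂ) a * w)
      - (w - a) * (starRingEnd ℂ) (w - a)
      = (1 - (‖a‖:ℂ)^2) * (1 - (‖w‖:ℂ)^2) := by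
  have h1 : (‖a‖:ℂ)^2 = a * (starRingEnd ℂ) a := (Complex.mul_conj' a).symm
  have h2 : (‖w‖:ℂ)^2 = w * (starRingEnd ℂ) w := (Complex.mul_conj' w).symm
  rw [h1, h2]
  simp only [map_sub, map_mul, map_one, Complex.conj_conj]
  ring

lemma mobius_norm_lt (a w : ℂ) (ha : ‖a‖ < 1) (hw : ‖w‖ < 1) : ‖mobius a w‖ < 1 := by
  have hd := mobius_denom_ne a w ha hw
  have key := conj_key a w
  have h1 : ‖w - a‖^2 < ‖1 - (starRingEnd ℂ) a * w‖^2 := by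
    have e1 : ((‖1 - (starRingEnd ℂ) a * w‖^2 - ‖w - a‖^2 : ℝ) : ℂ)
        = (1 - (‖a‖:ℂ)^2) * (1 - (‖w‖:ℂ)^2) := by
      push_cast
      rw [← Complex.mul_conj', ← Complex.mul_conj']
      linear_combination key
    have e2 : (‖1 - (starRingEnd ℂ) a * w‖^2 - ‖w - a‖^2 : ℝ)
        = (1 - ‖a‖^2) * (1 - ‖w‖^2) := by
      have := e1
      push_cast at this
      exact_mod_cast this
    have pa : (0:ℝ) < 1 - ‖a‖^2 := by nlinarith [norm_nonneg a]
    have pw : (0:ℝ) < 1 - ‖w‖^2 := by nlinarith [norm_nonneg w]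
    nlinarith [mul_pos pa pw]
  have h2 : ‖w - a‖ < ‖1 - (starRingEnd ℂ) a * w‖ := by
    nlinarith [norm_nonneg (w - a), norm_nonneg (1 - (starRingEnd ℂ) a * w)]
  rw [mobius, norm_div]
  rw [div_lt_one (lt_of_le_of_lt (norm_nonneg _) h2)]
  exact h2

lemma mobius_inv (a w : ℂ) (ha : ‖a‖ < 1) (hw : ‖w‖ < 1) :
    mobius (-a) (mobius a w) = w := by
  have hd := mobius_denom_ne a w ha hw
  have haa : (1 : ℂ) - (starRingEnd ℂ) a * a ≠ 0 := mobius_denom_ne a a ha ha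
  have hD : 1 - (starRingEnd ℂ) (-a) * mobius a w
      = (1 - (starRingEnd ℂ) a * a) / (1 - (starRingEnd ℂ) a * w) := by
    rw [mobius, map_neg, eq_div_iff hd]
    field_simp
    ring
  rw [mobius, hD, mobius]
  field_simp
  rw [div_eq_iff (by rwa [mul_comm] at haa), mul_sub, mul_div_cancel₀ _ (by rwa [mul_comm] at hd)]
  ring

lemma mobius_inv' (a w : ℂ) (ha : ‖a‖ < 1) (hw : ‖w‖ < 1) :
    mobius a (mobius (-a) w) = w := by
  have := mobius_inv (-a) w (by simpa using ha) hw
  rwa [neg_neg] at this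

lemma hasDerivAt_mobius (a w : ℂ) (h : 1 - (starRingEnd ℂ) a * w ≠ 0) :
    HasDerivAt (mobius a)
      ((1 - (starRingEnd ℂ) a * a) / (1 - (starRingEnd ℂ) a * w)^2) w := by
  have h1 : HasDerivAt (fun w : ℂ => (1:ℂ) - (starRingEnd ℂ) a * w)
      (-(starRingEnd ℂ) a) w := by
    simpa using ((hasDerivAt_id w).const_mul ((starRingEnd ℂ) a)).const_sub 1
  have h2 : HasDerivAt (fun w : ℂ => w - a) 1 w := (hasDerivAt_id w).sub_const a
  have h3 := h2.div h1 h
  exact h3.congr_deriv (by ring)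

lemma norm_one_sub_conj_mul_self (a : ℂ) (ha : ‖a‖ < 1) :
    ‖(1:ℂ) - (starRingEnd ℂ) a * a‖ = 1 - ‖a‖^2 := by
  have : (1:ℂ) - (starRingEnd ℂ) a * a = ((1 - ‖a‖^2 : ℝ) : ℂ) := by
    push_cast
    rw [show ((‖a‖:ℂ))^2 = a * (starRingEnd ℂ) a from (Complex.mul_conj' a).symm]
    ring
  rw [this, Complex.norm_real]
  rw [Real.norm_eq_abs]
  exact abs_of_nonneg (by nlinarith [norm_nonneg a])

lemma mobius_differentiableAt (a w : ℂ) (ha : ‖a‖ < 1) (hw : ‖w‖ < 1) :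
    DifferentiableAt ℂ (mobius a) w :=
  (hasDerivAt_mobius a w (mobius_denom_ne a w ha hw)).differentiableAt

lemma mobius_differentiableOn (a : ℂ) (ha : ‖a‖ < 1) :
    DifferentiableOn ℂ (mobius a) (ball (0:ℂ) 1) := fun w hw =>
  (mobius_differentiableAt a w ha (by simpa using hw)).differentiableWithinAt

lemma mobius_mapsTo (a : ℂ) (ha : ‖a‖ < 1) :
    MapsTo (mobius a) (ball (0:ℂ) 1) (ball (0:ℂ) 1) := fun w hw => by
  simp only [mem_ball, dist_zero_right] at *
  exact mobius_norm_lt a w ha hw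

/-- Sharp Schwarz–Pick bound at the origin. -/
lemma schwarz_pick_zero (h : ℂ → ℂ) (hd : DifferentiableOn ℂ h (ball (0:ℂ) 1))
    (hm : MapsTo h (ball (0:ℂ) 1) (ball (0:ℂ) 1)) :
    ‖deriv h 0‖ ≤ 1 - ‖h 0‖^2 := by
  have h0 : h 0 ∈ ball (0:ℂ) 1 := hm (mem_ball_self one_pos)
  have ha : ‖h 0‖ < 1 := by simpa using h0
  set a := h 0 with hA
  have hdenom : (1:ℂ) - (starRingEnd ℂ) a * a ≠ 0 := mobius_denom_ne a a ha ha
  have hdiffh : DifferentiableAt ℂ h 0 :=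
    hd.differentiableAt (isOpen_ball.mem_nhds (mem_ball_self one_pos))
  -- g = mobius a ∘ h
  have hg : HasDerivAt (mobius a ∘ h)
      ((1 - (starRingEnd ℂ) a * a) / (1 - (starRingEnd ℂ) a * a)^2 * deriv h 0) 0 :=
    (hasDerivAt_mobius a (h 0) (by rw [← hA]; exact hdenom)).comp 0 hdiffh.hasDerivAt
  have hgd : DifferentiableOn ℂ (mobius a ∘ h) (ball (0:ℂ) 1) :=
    (mobius_differentiableOn a ha).comp hd hm
  have hgm : MapsTo (mobius a ∘ h) (ball (0:ℂ) 1) (ball ((mobius a ∘ h) 0) 1) := by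
    have : (mobius a ∘ h) 0 = 0 := by simp [Function.comp, ← hA, mobius_self]
    rw [this]
    exact (mobius_mapsTo a ha).comp hm
  have hb := Complex.norm_deriv_le_div_of_mapsTo_ball hgd (hgm.mono_right ball_subset_closedBall) one_pos
  rw [hg.deriv] at hb
  have hsimp : (1 - (starRingEnd ℂ) a * a) / (1 - (starRingEnd ℂ) a * a)^2 * deriv h 0
      = (1 - (starRingEnd ℂ) a * a)⁻¹ * deriv h 0 := by
    field_simp
  rw [hsimp, norm_mul, norm_inv, norm_one_sub_conj_mul_self a ha] at hb
  rw [div_one] at hb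
  have hpos : (0:ℝ) < 1 - ‖a‖^2 := by nlinarith [norm_nonneg a]
  calc ‖deriv h 0‖ = (1 - ‖a‖^2) * ((1 - ‖a‖^2)⁻¹ * ‖deriv h 0‖) := by
        rw [← mul_assoc, mul_inv_cancel₀ hpos.ne', one_mul]
    _ ≤ (1 - ‖a‖^2) * 1 := by
        exact mul_le_mul_of_nonneg_left hb hpos.le
    _ = 1 - ‖a‖^2 := mul_one _

/-- Equality case of the Schwarz lemma at the origin. -/
lemma schwarz_eq (h : ℂ → ℂ) (hd : DifferentiableOn ℂ h (ball (0:ℂ) 1))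
    (hm : MapsTo h (ball (0:ℂ) 1) (ball (0:ℂ) 1)) (h0 : h 0 = 0)
    (hder : ‖deriv h 0‖ = 1) :
    ∀ w ∈ ball (0:ℂ) 1, h w = deriv h 0 * w := by
  intro w hw
  have hm' : MapsTo h (ball (0:ℂ) 1) (ball (h 0) 1) := by rw [h0]; exact hm
  have heq : ‖dslope h 0 0‖ = 1 / 1 := by
    rw [dslope_same, hder]; norm_num
  have := Complex.affine_of_mapsTo_ball_of_exists_norm_dslope_eq_div hd (hm'.mono_right ball_subset_closedBall)
    (mem_ball_self one_pos) heq hw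
  rw [this, h0, dslope_same]
  simp [mul_comm]

/-- A holomorphic self-map of the disk has `dslope` at 0 Lipschitz on a small ball. -/
lemma dslope_lip (h : ℂ → ℂ) (hd : DifferentiableOn ℂ h (ball (0:ℂ) 1))
    (hm : MapsTo h (ball (0:ℂ) 1) (ball (0:ℂ) 1)) :
    ∀ x ∈ closedBall (0:ℂ) (1/4), ∀ y ∈ closedBall (0:ℂ) (1/4),
      ‖dslope h 0 x - dslope h 0 y‖ ≤ 10 * ‖x - y‖ := by
  intro x hx y hy
  set d := dslope h 0 with hD
  have hd' : DifferentiableOn ℂ d (ball (0:ℂ) 1) :=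
    (differentiableOn_dslope (isOpen_ball.mem_nhds (mem_ball_self one_pos))).mpr hd
  have hball : ∀ u ∈ ball (0:ℂ) 1, ‖h u‖ < 1 := fun u hu => by simpa using hm hu
  have hm2 : MapsTo h (ball (0:ℂ) 1) (ball (h 0) 2) := fun u hu => by
    have h1 := hball u hu
    have h2 := hball 0 (mem_ball_self one_pos)
    simp only [mem_ball, dist_eq_norm]
    calc ‖h u - h 0‖ ≤ ‖h u‖ + ‖h 0‖ := norm_sub_le _ _
      _ < 2 := by linarith
  have bound2 : ∀ w ∈ ball (0:ℂ) 1, ‖d w‖ ≤ 2 := fun w hw => by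
    have := Complex.norm_dslope_le_div_of_mapsTo_ball hd (hm2.mono_right ball_subset_closedBall) hw
    simpa using this
  -- derivative of d is bounded by 10 on the closed ball of radius 1/4
  have derivb : ∀ ζ ∈ closedBall (0:ℂ) (1/4), ‖deriv d ζ‖ ≤ 10 := by
    intro ζ hζ
    have hζ' : ‖ζ‖ ≤ 1/4 := by simpa using hζ
    have hsub : ball ζ (1/2) ⊆ ball (0:ℂ) 1 := fun u hu => by
      simp only [mem_ball, dist_eq_norm] at *
      calc ‖u - 0‖ = ‖(u - ζ) + ζ‖ := by ring_nf
        _ ≤ ‖u - ζ‖ + ‖ζ‖ := norm_add_le _ _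
        _ < 1 := by linarith
    have hdd : DifferentiableOn ℂ d (ball ζ (1/2)) := hd'.mono hsub
    have hmm : MapsTo d (ball ζ (1/2)) (ball (d ζ) 5) := fun u hu => by
      have b1 := bound2 u (hsub hu)
      have b2 := bound2 ζ (hsub (mem_ball_self (by norm_num)))
      simp only [mem_ball, dist_eq_norm]
      calc ‖d u - d ζ‖ ≤ ‖d u‖ + ‖d ζ‖ := norm_sub_le _ _
        _ < 5 := by linarith
    have := Complex.norm_deriv_le_div_of_mapsTo_ball hdd (hmm.mono_right ball_subset_closedBall) (by norm_num)
    calc ‖deriv d ζ‖ ≤ 5 / (1/2) := this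
      _ = 10 := by norm_num
  -- mean value inequality
  have hsub14 : closedBall (0:ℂ) (1/4) ⊆ ball (0:ℂ) 1 := by
    apply closedBall_subset_ball; norm_num
  have key := Convex.norm_image_sub_le_of_norm_hasFDerivWithin_le
    (f := d) (C := 10) (s := closedBall (0:ℂ) (1/4))
    (f' := fun ζ => ContinuousLinearMap.smulRight (1 : ℂ →L[ℂ] ℂ) (deriv d ζ))
    (fun ζ hζ =>
      ((hd'.differentiableAt (isOpen_ball.mem_nhds (hsub14 hζ))).hasDerivAt.hasFDerivAt).hasFDerivWithinAt)
    (fun ζ hζ => by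
      rw [ContinuousLinearMap.norm_smulRight_apply, norm_one, one_mul]
      exact derivb ζ hζ)
    (convex_closedBall _ _) hy hx
  calc ‖d x - d y‖ ≤ 10 * ‖x - y‖ := key
    _ ≤ 10 * ‖x - y‖ := le_refl _

/-- If `Γ l w` is holomorphic in `w` on the disk (a self-map of the disk) for each `l ∈ Ω`, and
holomorphic in `l` on `Ω` for each `w`, then `l ↦ ∂_w Γ l (0)` is holomorphic on `Ω`. -/
lemma deriv_param (Ω : Set ℂ) (hΩ : IsOpen Ω) (Γ : ℂ → ℂ → ℂ)
    (hw : ∀ l ∈ Ω, DifferentiableOn ℂ (Γ l) (ball (0:ℂ) 1) ∧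
      MapsTo (Γ l) (ball (0:ℂ) 1) (ball (0:ℂ) 1))
    (hl : ∀ w ∈ ball (0:ℂ) 1, DifferentiableOn ℂ (fun l => Γ l w) Ω) :
    DifferentiableOn ℂ (fun l => deriv (Γ l) 0) Ω := by
  set t : ℕ → ℂ := fun k => ((1 / (4 * (k + 1)) : ℝ) : ℂ) with hT
  have htpos : ∀ k : ℕ, (0:ℝ) < 1 / (4 * ((k:ℝ) + 1)) := fun k => by positivity
  have htnorm : ∀ k : ℕ, ‖t k‖ = 1 / (4 * ((k:ℝ) + 1)) := fun k => by
    rw [hT]; simp only [Complex.norm_real, Real.norm_eq_abs]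
    exact abs_of_pos (htpos k)
  have htne : ∀ k : ℕ, t k ≠ 0 := fun k => by
    intro h0
    have := htnorm k
    rw [h0, norm_zero] at this
    exact absurd this.symm (ne_of_gt (htpos k))
  have htle : ∀ k : ℕ, ‖t k‖ ≤ 1/4 := fun k => by
    rw [htnorm]
    rw [div_le_div_iff₀ (by positivity) (by norm_num)]
    nlinarith [Nat.cast_nonneg (α := ℝ) k]
  have htball : ∀ k : ℕ, t k ∈ ball (0:ℂ) 1 := fun k => by
    simp only [mem_ball, dist_zero_right]
    calc ‖t k‖ ≤ 1/4 := htle k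
      _ < 1 := by norm_num
  have htcball : ∀ k : ℕ, t k ∈ closedBall (0:ℂ) (1/4) := fun k => by
    simpa using htle k
  set q : ℕ → ℂ → ℂ := fun k l => (t k)⁻¹ * (Γ l (t k) - Γ l 0) with hQ
  have hq_dslope : ∀ k : ℕ, ∀ l : ℂ, q k l = dslope (Γ l) 0 (t k) := fun k l => by
    rw [dslope_of_ne _ (htne k), slope_def_field]
    rw [hQ]
    simp only
    rw [div_eq_inv_mul]
    congr 1
    rw [sub_zero]
  have hqdiff : ∀ k : ℕ, DifferentiableOn ℂ (q k) Ω := fun k =>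
    ((hl (t k) (htball k)).sub (hl 0 (mem_ball_self one_pos))).const_mul _
  have hunif : TendstoUniformlyOn q (fun l => deriv (Γ l) 0) Filter.atTop Ω := by
    rw [tendstoUniformlyOn_iff]
    intro ε hε
    obtain ⟨N, hN⟩ := exists_nat_gt (10 / (4 * ε))
    filter_upwards [Filter.eventually_ge_atTop N] with k hk l hlΩ
    rw [dist_eq_norm, hq_dslope, ← dslope_same (Γ l) 0]
    have lip := dslope_lip (Γ l) (hw l hlΩ).1 (hw l hlΩ).2 0 (by simp) (t k) (htcball k)
    have : ‖(0:ℂ) - t k‖ = 1 / (4 * ((k:ℝ) + 1)) := by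
      rw [zero_sub, norm_neg, htnorm]
    calc ‖dslope (Γ l) 0 0 - dslope (Γ l) 0 (t k)‖ ≤ 10 * ‖(0:ℂ) - t k‖ := lip
      _ = 10 / (4 * ((k:ℝ) + 1)) := by rw [this]; ring
      _ < ε := by
          rw [div_lt_iff₀ (by positivity)]
          have hNk : (N:ℝ) ≤ (k:ℝ) := by exact_mod_cast hk
          have h1 : 10 / (4 * ε) < (k:ℝ) + 1 := by
            calc 10 / (4 * ε) < (N:ℝ) := hN
              _ ≤ (k:ℝ) + 1 := by linarith
          calc (10:ℝ) = (10 / (4 * ε)) * (4 * ε) := by field_simp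
            _ < ((k:ℝ) + 1) * (4 * ε) := by
                apply mul_lt_mul_of_pos_right h1 (by positivity)
            _ = ε * (4 * ((k:ℝ) + 1)) := by ring
  exact (hunif.tendstoLocallyUniformlyOn).differentiableOn
    (Filter.Eventually.of_forall hqdiff) hΩ

/-- The open unit polydisk in `ℂⁿ`. -/
def polyDisk (n : ℕ) : Set (Fin n → ℂ) := {z | ∀ i, ‖z i‖ < 1}

/-- `φ` is a holomorphic automorphism of the unit disk. -/
def IsDiskAut (φ : ℂ → ℂ) : Prop :=
  DifferentiableOn ℂ φ (ball (0 : ℂ) 1) ∧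
  MapsTo φ (ball (0 : ℂ) 1) (ball (0 : ℂ) 1) ∧
  ∃ ψ : ℂ → ℂ, DifferentiableOn ℂ ψ (ball (0 : ℂ) 1) ∧
    MapsTo ψ (ball (0 : ℂ) 1) (ball (0 : ℂ) 1) ∧
    (∀ w ∈ ball (0 : ℂ) 1, ψ (φ w) = w) ∧
    (∀ w ∈ ball (0 : ℂ) 1, φ (ψ w) = w)

lemma polyDisk_eq_pi (n : ℕ) :
    polyDisk n = Set.pi univ (fun _ : Fin n => ball (0:ℂ) 1) := by
  ext z
  simp [polyDisk, mem_ball, dist_zero_right]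

lemma isOpen_polyDisk (n : ℕ) : IsOpen (polyDisk n) := by
  rw [polyDisk_eq_pi]
  exact isOpen_set_pi finite_univ (fun i _ => isOpen_ball)

lemma convex_polyDisk (n : ℕ) : Convex ℝ (polyDisk n) := by
  rw [polyDisk_eq_pi]
  exact convex_pi (fun i _ => convex_ball 0 1)

section main

variable {n : ℕ} {F : (Fin n → ℂ) × ℂ → ℂ} {z₀ : Fin n → ℂ} {w₀ : ℂ}

/-- slice differentiability in w -/
lemma sliceW (hF : DifferentiableOn ℂ F (polyDisk n ×ˢ ball (0 : ℂ) 1))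
    (hmap : MapsTo F (polyDisk n ×ˢ ball (0 : ℂ) 1) (ball (0 : ℂ) 1))
    (hw₀ : ‖w₀‖ < 1) {z : Fin n → ℂ} (hz : z ∈ polyDisk n) :
    DifferentiableOn ℂ (fun w => mobius w₀ (F (z, mobius (-w₀) w))) (ball (0:ℂ) 1) ∧
    MapsTo (fun w => mobius w₀ (F (z, mobius (-w₀) w))) (ball (0:ℂ) 1) (ball (0:ℂ) 1) := by
  have hnw₀ : ‖-w₀‖ < 1 := by simpa using hw₀
  constructor
  · intro w hw
    have hw' : ‖w‖ < 1 := mem_ball_zero_iff.mp hw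
    have m1 : DifferentiableAt ℂ (mobius (-w₀)) w := mobius_differentiableAt _ w hnw₀ hw'
    have hu : mobius (-w₀) w ∈ ball (0:ℂ) 1 :=
      mem_ball_zero_iff.mpr (mobius_norm_lt (-w₀) w hnw₀ hw')
    have FAt : DifferentiableAt ℂ F (z, mobius (-w₀) w) :=
      hF.differentiableAt (((isOpen_polyDisk n).prod isOpen_ball).mem_nhds (Set.mk_mem_prod hz hu))
    have hFv : F (z, mobius (-w₀) w) ∈ ball (0:ℂ) 1 := hmap (Set.mk_mem_prod hz hu)
    have hFv' : ‖F (z, mobius (-w₀) w)‖ < 1 := by simpa using hFv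
    have inner : DifferentiableAt ℂ (fun w => F (z, mobius (-w₀) w)) w :=
      FAt.comp w ((differentiableAt_const z).prodMk m1)
    have outer : DifferentiableAt ℂ (mobius w₀) (F (z, mobius (-w₀) w)) :=
      mobius_differentiableAt w₀ _ hw₀ hFv'
    exact (outer.comp w inner).differentiableWithinAt
  · intro w hw
    have hw' : ‖w‖ < 1 := mem_ball_zero_iff.mp hw
    have hu : mobius (-w₀) w ∈ ball (0:ℂ) 1 :=
      mem_ball_zero_iff.mpr (mobius_norm_lt (-w₀) w hnw₀ hw')
    have hFv' : ‖F (z, mobius (-w₀) w)‖ < 1 := mem_ball_zero_iff.mp (hmap (Set.mk_mem_prod hz hu))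
    exact mem_ball_zero_iff.mpr (mobius_norm_lt w₀ _ hw₀ hFv')

theorem main_thm
    (hF : DifferentiableOn ℂ F (polyDisk n ×ˢ ball (0 : ℂ) 1))
    (hmap : MapsTo F (polyDisk n ×ˢ ball (0 : ℂ) 1) (ball (0 : ℂ) 1))
    (hz₀ : z₀ ∈ polyDisk n) (hw₀ : w₀ ∈ ball (0:ℂ) 1)
    (hfix : F (z₀, w₀) = w₀)
    (hder : ‖deriv (fun w => F (z₀, w)) w₀‖ = 1) :
    ∃ φ : ℂ → ℂ,
      (DifferentiableOn ℂ φ (ball (0 : ℂ) 1) ∧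
      MapsTo φ (ball (0 : ℂ) 1) (ball (0 : ℂ) 1) ∧
      ∃ ψ : ℂ → ℂ, DifferentiableOn ℂ ψ (ball (0 : ℂ) 1) ∧
        MapsTo ψ (ball (0 : ℂ) 1) (ball (0 : ℂ) 1) ∧
        (∀ w ∈ ball (0 : ℂ) 1, ψ (φ w) = w) ∧
        (∀ w ∈ ball (0 : ℂ) 1, φ (ψ w) = w)) ∧
      ∀ z ∈ polyDisk n, ∀ w ∈ ball (0 : ℂ) 1, F (z, w) = φ w := by
  have hw₀' : ‖w₀‖ < 1 := by simpa using hw₀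
  have hnw₀ : ‖-w₀‖ < 1 := by simpa using hw₀'
  have hne : (1:ℂ) - (starRingEnd ℂ) w₀ * w₀ ≠ 0 := mobius_denom_ne w₀ w₀ hw₀' hw₀'
  set g : (Fin n → ℂ) → ℂ → ℂ := fun z w => mobius w₀ (F (z, mobius (-w₀) w)) with hg
  set f : ℂ → ℂ := fun w => F (z₀, w) with hf
  -- value of g at (z, 0)
  have g_zero : ∀ z, g z 0 = mobius w₀ (F (z, w₀)) := fun z => by
    rw [hg]; simp only; rw [mobius_neg_zero]
  have g_z₀_zero : g z₀ 0 = 0 := by rw [g_zero, hfix, mobius_self]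
  -- derivative of g z₀ at 0 has norm 1
  have hfd : DifferentiableAt ℂ f w₀ := by
    have FAt : DifferentiableAt ℂ F (z₀, w₀) :=
      hF.differentiableAt (((isOpen_polyDisk n).prod isOpen_ball).mem_nhds (Set.mk_mem_prod hz₀ hw₀))
    exact FAt.comp w₀ ((differentiableAt_const z₀).prodMk differentiableAt_id)
  have hm0 : mobius (-w₀) 0 = w₀ := mobius_neg_zero w₀
  have h1 : HasDerivAt (mobius (-w₀)) (1 - (starRingEnd ℂ) w₀ * w₀) 0 := by
    have h := hasDerivAt_mobius (-w₀) 0 (by simp)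
    convert h using 1
    simp [map_neg]
  have h3 : HasDerivAt (mobius w₀)
      ((1 - (starRingEnd ℂ) w₀ * w₀) / (1 - (starRingEnd ℂ) w₀ * w₀)^2) w₀ :=
    hasDerivAt_mobius w₀ w₀ hne
  have comp1 : HasDerivAt (f ∘ mobius (-w₀))
      (deriv f w₀ * (1 - (starRingEnd ℂ) w₀ * w₀)) 0 :=
    HasDerivAt.comp 0 (by rw [hm0]; exact hfd.hasDerivAt) h1
  have comp2 : HasDerivAt (mobius w₀ ∘ (f ∘ mobius (-w₀)))
      ((1 - (starRingEnd ℂ) w₀ * w₀) / (1 - (starRingEnd ℂ) w₀ * w₀)^2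
        * (deriv f w₀ * (1 - (starRingEnd ℂ) w₀ * w₀))) 0 := by
    refine HasDerivAt.comp 0 ?_ comp1
    have hval : (f ∘ mobius (-w₀)) 0 = w₀ := by
      simp only [Function.comp_apply, hm0]
      rw [hf]; exact hfix
    rw [hval]; exact h3
  have deriv_g_z₀ : deriv (g z₀) 0 = deriv f w₀ := by
    have hd := comp2.deriv
    have heq : (1 - (starRingEnd ℂ) w₀ * w₀) / (1 - (starRingEnd ℂ) w₀ * w₀)^2
        * (deriv f w₀ * (1 - (starRingEnd ℂ) w₀ * w₀)) = deriv f w₀ := by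
      field_simp
    rw [heq] at hd
    exact hd
  have norm_c : ‖deriv (g z₀) 0‖ = 1 := by rw [deriv_g_z₀]; exact hder
  set c : ℂ := deriv (g z₀) 0 with hc
  have hcne : c ≠ 0 := by
    intro h0; rw [h0, norm_zero] at norm_c; norm_num at norm_c
  -- main propagation: g z w = c * w for all z, w
  have key : ∀ z₁ ∈ polyDisk n, ∀ w ∈ ball (0:ℂ) 1, g z₁ w = c * w := by
    intro z₁ hz₁
    set L : ℂ → Fin n → ℂ := fun l => z₀ + l • (z₁ - z₀) with hL
    set Ω : Set ℂ := L ⁻¹' (polyDisk n) with hΩ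
    have hLcont : Continuous L := by
      rw [hL]; exact continuous_const.add (continuous_id.smul continuous_const)
    have hΩopen : IsOpen Ω := (isOpen_polyDisk n).preimage hLcont
    have hΩconv : Convex ℝ Ω := by
      intro a ha b hb s t hs ht hst
      have hLab : L (s • a + t • b) = s • L a + t • L b := by
        rw [hL]; simp only
        rw [add_smul, smul_assoc, smul_assoc, smul_add, smul_add]
        have hz : s • z₀ + t • z₀ = z₀ := by rw [← add_smul, hst, one_smul]
        rw [show s • z₀ + s • (a • (z₁ - z₀)) + (t • z₀ + t • (b • (z₁ - z₀)))
            = (s • z₀ + t • z₀) + (s • (a • (z₁ - z₀)) + t • (b • (z₁ - z₀))) from by abel, hz]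
      show L (s • a + t • b) ∈ polyDisk n
      rw [hLab]
      exact convex_polyDisk n ha hb hs ht hst
    have hL0 : L 0 = z₀ := by rw [hL]; simp
    have hL1 : L 1 = z₁ := by rw [hL]; simp
    have h0mem : (0:ℂ) ∈ Ω := by show L 0 ∈ polyDisk n; rw [hL0]; exact hz₀
    have h1mem : (1:ℂ) ∈ Ω := by show L 1 ∈ polyDisk n; rw [hL1]; exact hz₁
    set Γ : ℂ → ℂ → ℂ := fun l w => g (L l) w with hΓ
    have hΓw : ∀ l ∈ Ω, DifferentiableOn ℂ (Γ l) (ball (0:ℂ) 1) ∧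
        MapsTo (Γ l) (ball (0:ℂ) 1) (ball (0:ℂ) 1) := fun l hl =>
      sliceW hF hmap hw₀' hl
    have hΓl : ∀ w ∈ ball (0:ℂ) 1, DifferentiableOn ℂ (fun l => Γ l w) Ω := by
      intro w hw
      intro l hl
      have hw' : ‖w‖ < 1 := mem_ball_zero_iff.mp hw
      have hu : mobius (-w₀) w ∈ ball (0:ℂ) 1 :=
        mem_ball_zero_iff.mpr (mobius_norm_lt (-w₀) w hnw₀ hw')
      have FAt : DifferentiableAt ℂ F (L l, mobius (-w₀) w) :=
        hF.differentiableAt (((isOpen_polyDisk n).prod isOpen_ball).mem_nhds (Set.mk_mem_prod hl hu))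
      have hLd : DifferentiableAt ℂ L l := by
        rw [hL]
        exact (differentiableAt_id.smul_const (z₁ - z₀)).const_add z₀
      have inner : DifferentiableAt ℂ (fun l => F (L l, mobius (-w₀) w)) l :=
        FAt.comp l (hLd.prodMk (differentiableAt_const _))
      have hFv' : ‖F (L l, mobius (-w₀) w)‖ < 1 := mem_ball_zero_iff.mp (hmap (Set.mk_mem_prod hl hu))
      exact ((mobius_differentiableAt w₀ _ hw₀' hFv').comp l inner).differentiableWithinAt
    set β : ℂ → ℂ := fun l => deriv (Γ l) 0 with hβ
    have βdiff : DifferentiableOn ℂ β Ω := deriv_param Ω hΩopen Γ hΓw hΓl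
    have βbound : ∀ l ∈ Ω, ‖β l‖ ≤ 1 := by
      intro l hl
      have := schwarz_pick_zero (Γ l) (hΓw l hl).1 (hΓw l hl).2
      have h2 : (0:ℝ) ≤ ‖Γ l 0‖^2 := sq_nonneg _
      calc ‖β l‖ ≤ 1 - ‖Γ l 0‖^2 := this
        _ ≤ 1 := by linarith
    have hβ0 : β 0 = c := by
      rw [hβ]; simp only
      rw [hΓ]; simp only
      rw [hL0]
    have hmax : IsMaxOn (norm ∘ β) Ω 0 := by
      apply isMaxOn_iff.mpr
      intro l hl
      simp only [Function.comp_apply]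
      rw [hβ0, norm_c]
      exact βbound l hl
    have maxmod := Complex.eqOn_of_isPreconnected_of_isMaxOn_norm
      hΩconv.isPreconnected hΩopen βdiff h0mem hmax
    have hβ1 : β 1 = c := by
      have := maxmod h1mem
      rw [this, Function.const_apply, hβ0]
    -- slice at z₁ : derivative norm 1, fixes 0
    have hΓ1 : Γ 1 = g z₁ := by rw [hΓ]; simp only; rw [hL1]
    have hd1 : deriv (g z₁) 0 = c := by rw [← hΓ1]; exact hβ1
    have hn1 : ‖deriv (g z₁) 0‖ = 1 := by rw [hd1]; exact norm_c
    have sp := schwarz_pick_zero (g z₁) (sliceW hF hmap hw₀' hz₁).1 (sliceW hF hmap hw₀' hz₁).2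
    rw [hn1] at sp
    have hz₁0 : g z₁ 0 = 0 := by
      have h2 : ‖g z₁ 0‖^2 ≤ 0 := by linarith
      have h3 : ‖g z₁ 0‖ = 0 := by nlinarith [norm_nonneg (g z₁ 0), sq_nonneg ‖g z₁ 0‖]
      exact norm_eq_zero.mp h3
    intro w hw
    have := schwarz_eq (g z₁) (sliceW hF hmap hw₀' hz₁).1 (sliceW hF hmap hw₀' hz₁).2
      hz₁0 hn1 w hw
    rw [this, hd1]
  -- define the automorphism
  have hcinv : ‖c⁻¹‖ = 1 := by rw [norm_inv, norm_c]; norm_num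
  set φ : ℂ → ℂ := fun u => mobius (-w₀) (c * mobius w₀ u) with hφ
  set ψ : ℂ → ℂ := fun u => mobius (-w₀) (c⁻¹ * mobius w₀ u) with hψ
  have aux_diff : ∀ (e : ℂ), ‖e‖ = 1 →
      DifferentiableOn ℂ (fun u => mobius (-w₀) (e * mobius w₀ u)) (ball (0:ℂ) 1) := by
    intro e he
    intro u hu
    have hu' : ‖u‖ < 1 := mem_ball_zero_iff.mp hu
    have hmu : ‖mobius w₀ u‖ < 1 := mobius_norm_lt w₀ u hw₀' hu'
    have hem : ‖e * mobius w₀ u‖ < 1 := by rw [norm_mul, he, one_mul]; exact hmu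
    have d1 : DifferentiableAt ℂ (fun u => e * mobius w₀ u) u :=
      (mobius_differentiableAt w₀ u hw₀' hu').const_mul e
    exact ((mobius_differentiableAt (-w₀) _ hnw₀ hem).comp u d1).differentiableWithinAt
  have aux_maps : ∀ (e : ℂ), ‖e‖ = 1 →
      MapsTo (fun u => mobius (-w₀) (e * mobius w₀ u)) (ball (0:ℂ) 1) (ball (0:ℂ) 1) := by
    intro e he u hu
    have hu' : ‖u‖ < 1 := mem_ball_zero_iff.mp hu
    have hem : ‖e * mobius w₀ u‖ < 1 := by
      rw [norm_mul, he, one_mul]; exact mobius_norm_lt w₀ u hw₀' hu'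
    exact mem_ball_zero_iff.mpr (mobius_norm_lt (-w₀) _ hnw₀ hem)
  have aux_inv : ∀ (e : ℂ), ‖e‖ = 1 → ∀ u, ‖u‖ < 1 →
      mobius (-w₀) (e⁻¹ * mobius w₀ (mobius (-w₀) (e * mobius w₀ u))) = u := by
    intro e he u hu'
    have hene : e ≠ 0 := by intro h0; rw [h0, norm_zero] at he; norm_num at he
    have hmu : ‖mobius w₀ u‖ < 1 := mobius_norm_lt w₀ u hw₀' hu'
    have hem : ‖e * mobius w₀ u‖ < 1 := by rw [norm_mul, he, one_mul]; exact hmu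
    rw [mobius_inv' w₀ _ hw₀' hem]
    rw [inv_mul_cancel_left₀ hene]
    exact mobius_inv w₀ u hw₀' hu'
  refine ⟨φ, ⟨aux_diff c norm_c, aux_maps c norm_c, ψ, aux_diff c⁻¹ hcinv, aux_maps c⁻¹ hcinv,
    ?_, ?_⟩, ?_⟩
  · intro u hu
    exact aux_inv c norm_c u (by simpa using hu)
  · intro u hu
    have := aux_inv c⁻¹ hcinv u (by simpa using hu)
    rw [inv_inv] at this
    exact this
  · intro z hz u hu
    have hu' : ‖u‖ < 1 := mem_ball_zero_iff.mp hu
    have hmu : mobius w₀ u ∈ ball (0:ℂ) 1 :=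
      mem_ball_zero_iff.mpr (mobius_norm_lt w₀ u hw₀' hu')
    have hk := key z hz (mobius w₀ u) hmu
    rw [hg] at hk
    simp only at hk
    rw [mobius_inv w₀ u hw₀' hu'] at hk
    -- hk : mobius w₀ (F (z, u)) = c * mobius w₀ u
    have hFu : ‖F (z, u)‖ < 1 := mem_ball_zero_iff.mp (hmap (Set.mk_mem_prod hz hu))
    have : mobius (-w₀) (mobius w₀ (F (z, u))) = F (z, u) := mobius_inv w₀ _ hw₀' hFu
    rw [hφ]
    simp only
    rw [← hk, this]

end main


theorem deriv_eq_one_implies_automorphism (n : ℕ)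
    (F : (Fin n → ℂ) × ℂ → ℂ)
    (hF : DifferentiableOn ℂ F (polyDisk n ×ˢ ball (0 : ℂ) 1))
    (hmap : MapsTo F (polyDisk n ×ˢ ball (0 : ℂ) 1) (ball (0 : ℂ) 1))
    (z₀ : Fin n → ℂ) (w₀ : ℂ) (hz₀ : z₀ ∈ polyDisk n) (hw₀ : w₀ ∈ ball (0 : ℂ) 1)
    (hfix : F (z₀, w₀) = w₀)
    (hder : ‖deriv (fun w => F (z₀, w)) w₀‖ = 1) :
    ∃ φ : ℂ → ℂ, IsDiskAut φ ∧
      ∀ z ∈ polyDisk n, ∀ w ∈ ball (0 : ℂ) 1, F (z, w) = φ w := by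
  obtain ⟨φ, hA, hE⟩ := main_thm hF hmap hz₀ hw₀ hfix hder
  exact ⟨φ, hA, hE⟩
end
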